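/- Let (θ_p, φ_p) ∈ [0,π]×[0,2π), p = 1,…,m, be sampling points whose elevations are cosine-symmetric, i.e., there is a permutation σ of {1,…,m} with cos θ_{σ(p)} = −cos θ_p for all p. Let k be an integer and let l_1, l_2 ≥ |k| be integers such that l_1 + l_2 is odd. Then Σ_{p=1}^m conj(Y_{l_1}^k(θ_p, φ_p)) · Y_{l_2}^k(θ_p, φ_p) = 0; that is, the two corresponding columns of the spherical-harmonic sensing matrix are orthogonal. -/

import Mathlib

open scoped Real BigOperators

/-- Associated Legendre polynomial `P_l^k(x)` for integer order `k` (possibly negative). -/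
noncomputable def assocLegendre (l : ℕ) (k : ℤ) (x : ℝ) : ℝ :=
  ((-1 : ℝ) ^ k / (2 ^ l * (Nat.factorial l : ℝ))) * (1 - x ^ 2) ^ ((k : ℝ) / 2) *
    iteratedDeriv (k + (l : ℤ)).toNat (fun y : ℝ => (y ^ 2 - 1) ^ l) x

/-- Normalization factor of spherical harmonics. -/
noncomputable def shNormFactor (l : ℕ) (k : ℤ) : ℝ :=
  Real.sqrt ((2 * (l : ℝ) + 1) / (4 * Real.pi) *
    ((Nat.factorial ((l : ℤ) - k).toNat : ℝ) / (Nat.factorial ((l : ℤ) + k).toNat : ℝ)))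

/-- Spherical harmonic `Y_l^k(θ,φ)`. -/
noncomputable def sphericalHarmonic (l : ℕ) (k : ℤ) (θ φ : ℝ) : ℂ :=
  ((shNormFactor l k * assocLegendre l k (Real.cos θ) : ℝ) : ℂ) *
    Complex.exp (Complex.I * (k : ℂ) * (φ : ℂ))

/-- Jacobi polynomial `P_α^{(ξ,λ)}(x)`. -/
noncomputable def jacobiP (a ξ lam : ℕ) (x : ℝ) : ℝ :=
  ((-1 : ℝ) ^ a / (2 ^ a * (Nat.factorial a : ℝ))) * (1 - x) ^ (-(ξ : ℤ)) *
    (1 + x) ^ (-(lam : ℤ)) *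
    iteratedDeriv a (fun y : ℝ => (1 - y) ^ ξ * (1 + y) ^ lam * (1 - y ^ 2) ^ a) x

/-- The coefficient `γ = α!(α+ξ+λ)!/((α+ξ)!(α+λ)!)`. -/
noncomputable def jacobiGamma (a ξ lam : ℕ) : ℝ :=
  ((Nat.factorial a : ℝ) * (Nat.factorial (a + ξ + lam) : ℝ)) /
    ((Nat.factorial (a + ξ) : ℝ) * (Nat.factorial (a + lam) : ℝ))

/-- Wigner d-function `d_l^{k,n}(cos θ)` (as a function of `θ`). -/
noncomputable def wignerd (l : ℕ) (k n : ℤ) (θ : ℝ) : ℝ :=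
  let ξ : ℕ := (k - n).natAbs
  let lam : ℕ := (k + n).natAbs
  let a : ℕ := l - (ξ + lam) / 2
  let ω : ℝ := if k ≤ n then 1 else (-1 : ℝ) ^ (n - k)
  ω * Real.sqrt (jacobiGamma a ξ lam) * (Real.sin (θ / 2)) ^ ξ * (Real.cos (θ / 2)) ^ lam *
    jacobiP a ξ lam (Real.cos θ)

/-- Wigner D-function `D_l^{k,n}(θ,φ,χ)`. -/
noncomputable def wignerD (l : ℕ) (k n : ℤ) (θ φ χ : ℝ) : ℂ :=
  ((Real.sqrt ((2 * (l : ℝ) + 1) / (8 * Real.pi ^ 2)) : ℝ) : ℂ) *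
    Complex.exp (-(Complex.I * (k : ℂ) * (φ : ℂ))) * ((wignerd l k n θ : ℝ) : ℂ) *
    Complex.exp (-(Complex.I * (n : ℂ) * (χ : ℂ)))

/-- Column index set for the spherical-harmonic sensing matrix: pairs `(l,k)`,
`0 ≤ l ≤ B-1`, `-l ≤ k ≤ l`.  It has `B^2` elements. -/
abbrev SHIndex (B : ℕ) := Σ l : Fin B, ↥(Set.Icc (-(l.1 : ℤ)) (l.1 : ℤ))

/-- Column index set for the Wigner-D sensing matrix: triples `(l,k,n)`,
`0 ≤ l ≤ B-1`, `-l ≤ k,n ≤ l`.  It has `B(2B-1)(2B+1)/3` elements. -/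
abbrev WDIndex (B : ℕ) :=
  Σ l : Fin B, ↥(Set.Icc (-(l.1 : ℤ)) (l.1 : ℤ)) × ↥(Set.Icc (-(l.1 : ℤ)) (l.1 : ℤ))

/-- The spherical-harmonic sensing matrix. -/
noncomputable def shMatrix {m : ℕ} (B : ℕ) (θ φ : Fin m → ℝ) :
    Matrix (Fin m) (SHIndex B) ℂ :=
  fun p i => sphericalHarmonic i.1.1 i.2.1 (θ p) (φ p)

/-- The Wigner-D sensing matrix. -/
noncomputable def wdMatrix {m : ℕ} (B : ℕ) (θ φ χ : Fin m → ℝ) :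
    Matrix (Fin m) (WDIndex B) ℂ :=
  fun p i => wignerD i.1.1 i.2.1.1 i.2.2.1 (θ p) (φ p) (χ p)

/-- Mutual coherence of a matrix: the supremum over pairs of distinct columns of the
normalized absolute inner product. -/
noncomputable def mutualCoherence {m : ℕ} {ι : Type*} (A : Matrix (Fin m) ι ℂ) : ℝ :=
  sSup {x : ℝ | ∃ i j : ι, i ≠ j ∧
    x = ‖∑ p, (starRingEnd ℂ) (A p i) * A p j‖ /
        (Real.sqrt (∑ p, Complex.normSq (A p i)) * Real.sqrt (∑ p, Complex.normSq (A p j)))}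



lemma iteratedDeriv_even_neg (n l : ℕ) (x : ℝ) :
    iteratedDeriv n (fun y : ℝ => (y ^ 2 - 1) ^ l) (-x)
      = (-1 : ℝ) ^ n * iteratedDeriv n (fun y : ℝ => (y ^ 2 - 1) ^ l) x := by
  have h := iteratedDeriv_comp_neg n (fun y : ℝ => (y ^ 2 - 1) ^ l) x
  simp only [neg_sq, smul_eq_mul] at h
  have hsq : ((-1 : ℝ) ^ n) ^ 2 = 1 := by
    rw [← pow_mul, mul_comm, pow_mul, neg_one_sq, one_pow]
  linear_combination (-(-1 : ℝ) ^ n) * h -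
    iteratedDeriv n (fun y : ℝ => (y ^ 2 - 1) ^ l) (-x) * hsq

lemma assocLegendre_neg (l : ℕ) (k : ℤ) (x : ℝ) :
    assocLegendre l k (-x) = (-1 : ℝ) ^ (k + (l : ℤ)).toNat * assocLegendre l k x := by
  unfold assocLegendre
  rw [neg_sq, iteratedDeriv_even_neg, mul_left_comm]

/-- for cosine-symmetric elevation samples, two spherical-harmonic columns with
equal order `k` and degrees `l₁, l₂` with `l₁ + l₂` odd are orthogonal. -/
theorem sphericalHarmonic_columns_orthogonal (m : ℕ) (θ φ : Fin m → ℝ)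
    (hθ : ∀ p, θ p ∈ Set.Icc 0 Real.pi) (hφ : ∀ p, φ p ∈ Set.Ico 0 (2 * Real.pi))
    (σ : Equiv.Perm (Fin m)) (hσ : ∀ p, Real.cos (θ (σ p)) = -Real.cos (θ p))
    (k : ℤ) (l₁ l₂ : ℕ) (hl₁ : k.natAbs ≤ l₁) (hl₂ : k.natAbs ≤ l₂) (hodd : Odd (l₁ + l₂)) :
    ∑ p, (starRingEnd ℂ) (sphericalHarmonic l₁ k (θ p) (φ p)) *
      sphericalHarmonic l₂ k (θ p) (φ p) = 0 := by
  set f : ℝ → ℝ := fun c =>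
    shNormFactor l₁ k * assocLegendre l₁ k c * (shNormFactor l₂ k * assocLegendre l₂ k c) with hf
  have hterm : ∀ p, (starRingEnd ℂ) (sphericalHarmonic l₁ k (θ p) (φ p)) *
      sphericalHarmonic l₂ k (θ p) (φ p) = ((f (Real.cos (θ p)) : ℝ) : ℂ) := by
    intro p
    unfold sphericalHarmonic
    rw [map_mul, Complex.conj_ofReal, ← Complex.exp_conj]
    have hc : (starRingEnd ℂ) (Complex.I * (k : ℂ) * ((φ p : ℝ) : ℂ))
        = -(Complex.I * (k : ℂ) * ((φ p : ℝ) : ℂ)) := by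
      simp only [map_mul, Complex.conj_I, Complex.conj_ofReal, map_intCast]
      ring
    rw [hc, mul_mul_mul_comm, ← Complex.exp_add, neg_add_cancel, Complex.exp_zero, mul_one, hf]
    push_cast
    ring
  have hl₁' : ((k + (l₁ : ℤ)).toNat : ℤ) = k + l₁ := Int.toNat_of_nonneg (by omega)
  have hl₂' : ((k + (l₂ : ℤ)).toNat : ℤ) = k + l₂ := Int.toNat_of_nonneg (by omega)
  have hodd' : Odd ((k + (l₁ : ℤ)).toNat + (k + (l₂ : ℤ)).toNat) := by
    rw [← Int.odd_coe_nat]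
    obtain ⟨t, ht⟩ := hodd
    push_cast [hl₁', hl₂']
    exact ⟨k + t, by push_cast; omega⟩
  have hfneg : ∀ c : ℝ, f (-c) = - f c := by
    intro c
    have hm : (-1 : ℝ) ^ (k + (l₁ : ℤ)).toNat * (-1 : ℝ) ^ (k + (l₂ : ℤ)).toNat = -1 := by
      rw [← pow_add, hodd'.neg_one_pow]
    simp only [hf, assocLegendre_neg]
    linear_combination (shNormFactor l₁ k * assocLegendre l₁ k c * shNormFactor l₂ k *
      assocLegendre l₂ k c) * hm
  have hS : ∑ p, ((f (Real.cos (θ p)) : ℝ) : ℂ) = 0 := by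
    have h2 : ∑ p, ((f (Real.cos (θ p)) : ℝ) : ℂ)
        = ∑ p, ((f (Real.cos (θ (σ p))) : ℝ) : ℂ) :=
      (Equiv.sum_comp σ fun p => ((f (Real.cos (θ p)) : ℝ) : ℂ)).symm
    have h3 : ∀ p, ((f (Real.cos (θ (σ p))) : ℝ) : ℂ) = -((f (Real.cos (θ p)) : ℝ) : ℂ) := by
      intro p; rw [hσ p, hfneg]; push_cast; ring
    rw [Finset.sum_congr rfl fun p _ => h3 p, Finset.sum_neg_distrib] at h2
    linear_combination h2 / 2
  rw [Finset.sum_congr rfl fun p _ => hterm p, hS]
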